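/- For every real r > 0 and every i ∈ {0,1,…,m}, the r-th moment of the norm over the ball of radius p^{−i} with respect to normalized counting measure satisfies p^{−m} · Σ_{x ∈ G_m, ‖x‖ ≤ p^{−i}} ‖x‖^r = (p − 1)·p^r·(p^{−i(r+1)} − p^{−m(r+1)})/(p^{r+1} − 1). -/

import Mathlib

open scoped BigOperators Classical

/-- The norm on `G_m = ZMod (p^m)`: `‖x‖ = p^{−v_p(x̄)}` for `x ≠ 0`, `‖0‖ = 0`. -/
noncomputable def pnorm (p m : ℕ) (x : ZMod (p ^ m)) : ℝ :=
  if x = 0 then 0 else (p : ℝ) ^ (-(padicValNat p x.val : ℤ))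


-- count of multiples of p^j in range (p^m)
lemma count_range (p : ℕ) (hp : 0 < p) (j m : ℕ) (hj : j ≤ m) :
    ((Finset.range (p ^ m)).filter (fun k => p ^ j ∣ k)).card = p ^ (m - j) := by
  have himg : (Finset.range (p ^ m)).filter (fun k => p ^ j ∣ k)
      = (Finset.range (p ^ (m - j))).image (fun k => p ^ j * k) := by
    ext k
    simp only [Finset.mem_filter, Finset.mem_range, Finset.mem_image]
    constructor
    · rintro ⟨hlt, a, rfl⟩
      refine ⟨a, ?_, rfl⟩
      have : p ^ j * a < p ^ j * p ^ (m - j) := by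
        rwa [← pow_add, Nat.add_sub_cancel' hj]
      exact lt_of_mul_lt_mul_left this (Nat.zero_le _)
    · rintro ⟨a, ha, rfl⟩
      refine ⟨?_, a, rfl⟩
      calc p ^ j * a < p ^ j * p ^ (m - j) := by
            exact (Nat.mul_lt_mul_left (pow_pos hp j)).mpr ha
        _ = p ^ m := by rw [← pow_add, Nat.add_sub_cancel' hj]
  rw [himg, Finset.card_image_of_injective _ (fun a b h => Nat.eq_of_mul_eq_mul_left (pow_pos hp j) h),
    Finset.card_range]

lemma count_zmod (p : ℕ) [hp : Fact p.Prime] (j m : ℕ) (hj : j ≤ m) :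
    ((Finset.univ : Finset (ZMod (p ^ m))).filter (fun x => p ^ j ∣ x.val)).card
      = p ^ (m - j) := by
  haveI : NeZero (p ^ m) := ⟨(pow_pos hp.out.pos m).ne'⟩
  rw [← count_range p hp.out.pos j m hj]
  apply Finset.card_bij (fun x _ => x.val)
  · intro x hx
    simp only [Finset.mem_filter, Finset.mem_univ, true_and] at hx
    simp only [Finset.mem_filter, Finset.mem_range]
    exact ⟨ZMod.val_lt x, hx⟩
  · intro a ha b hb hab
    exact ZMod.val_injective _ hab
  · intro k hk
    simp only [Finset.mem_filter, Finset.mem_range] at hk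
    refine ⟨(k : ZMod (p ^ m)), ?_, ?_⟩
    · simp only [Finset.mem_filter, Finset.mem_univ, true_and]
      rw [ZMod.val_natCast_of_lt hk.1]; exact hk.2
    · rw [ZMod.val_natCast_of_lt hk.1]

/-- For every `r > 0` and `i ∈ {0,…,m}`, the `r`-th moment of the norm over the ball of
radius `p^{−i}` with respect to normalized counting measure satisfies
`p^{−m} · Σ_{‖x‖ ≤ p^{−i}} ‖x‖^r = (p − 1)·p^r·(p^{−i(r+1)} − p^{−m(r+1)})/(p^{r+1} − 1)`. -/
theorem stmt9 (p : ℕ) [Fact p.Prime] (m : ℕ) (hm : 0 < m) (r : ℝ) (hr : 0 < r)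
    (i : ℕ) (hi : i ≤ m) :
    (p : ℝ) ^ (-(m : ℝ)) *
      ∑ x ∈ Finset.univ.filter (fun x : ZMod (p ^ m) => pnorm p m x ≤ (p : ℝ) ^ (-(i : ℝ))),
        pnorm p m x ^ r =
      ((p : ℝ) - 1) * (p : ℝ) ^ r *
        ((p : ℝ) ^ (-(i : ℝ) * (r + 1)) - (p : ℝ) ^ (-(m : ℝ) * (r + 1))) /
        ((p : ℝ) ^ (r + 1) - 1) := by
  have hp := (Fact.out : p.Prime)
  haveI : NeZero (p ^ m) := ⟨(pow_pos hp.pos m).ne'⟩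
  have hP1 : (1 : ℝ) < (p : ℝ) := by exact_mod_cast hp.one_lt
  have hP0 : (0 : ℝ) < (p : ℝ) := by positivity
  -- the filter condition is divisibility
  have hcond : ∀ x : ZMod (p ^ m), (pnorm p m x ≤ (p : ℝ) ^ (-(i : ℝ))) ↔ p ^ i ∣ x.val := by
    intro x
    unfold pnorm
    by_cases hx : x = 0
    · simp [hx, ZMod.val_zero, Real.rpow_natCast]
    · have hval : x.val ≠ 0 := fun h => hx (by
        apply ZMod.val_injective; simpa [ZMod.val_zero] using h)
      rw [if_neg hx]
      rw [show ((p : ℝ) ^ (-(i : ℝ))) = (p : ℝ) ^ (-(i : ℤ)) by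
        rw [← Real.rpow_intCast]; push_cast; ring_nf,
        zpow_le_zpow_iff_right₀ hP1, neg_le_neg_iff, Int.ofNat_le,
        ← padicValNat_dvd_iff_le hval]
  have hvlt : ∀ x : ZMod (p ^ m), x.val ≠ 0 → padicValNat p x.val < m := by
    intro x hval
    by_contra h
    push_neg at h
    have : p ^ m ∣ x.val := dvd_trans (pow_dvd_pow p h) (pow_padicValNat_dvd)
    have := Nat.le_of_dvd (Nat.pos_of_ne_zero hval) this
    exact absurd (ZMod.val_lt x) (not_lt.mpr this)
  -- abbreviations
  set X : ℝ := (p : ℝ) ^ (-(r + 1)) with hXdef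
  set C : ℝ := (p : ℝ) ^ (r + 1) with hCdef
  have hXC : X * C = 1 := by
    rw [hXdef, hCdef, ← Real.rpow_add hP0, neg_add_cancel, Real.rpow_zero]
  have hC1 : 1 < C := Real.one_lt_rpow_iff_of_pos hP0 |>.mpr (Or.inl ⟨hP1, by linarith⟩)
  have hX1 : X < 1 := Real.rpow_lt_one_of_one_lt_of_neg hP1 (by linarith)
  have hX0 : 0 < X := Real.rpow_pos_of_pos hP0 _
  -- rewrite the filter
  rw [show Finset.univ.filter (fun x : ZMod (p ^ m) => pnorm p m x ≤ (p : ℝ) ^ (-(i : ℝ)))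
      = Finset.univ.filter (fun x : ZMod (p ^ m) => p ^ i ∣ x.val) from
    Finset.filter_congr (fun x _ => by rw [hcond x])]
  -- drop the zero term
  set B := Finset.univ.filter (fun x : ZMod (p ^ m) => x ≠ 0 ∧ p ^ i ∣ x.val) with hBdef
  have hsub : B ⊆ Finset.univ.filter (fun x : ZMod (p ^ m) => p ^ i ∣ x.val) := by
    intro x hx
    simp only [hBdef, Finset.mem_filter, Finset.mem_univ, true_and] at *
    exact hx.2
  rw [← Finset.sum_subset hsub (by
    intro x hx hxB
    simp only [hBdef, Finset.mem_filter, Finset.mem_univ, true_and, not_and] at hx hxB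
    by_cases h0 : x = 0
    · rw [h0]; unfold pnorm; rw [if_pos rfl, Real.zero_rpow hr.ne']
    · exact absurd (hxB h0) (not_not.mpr hx))]
  -- fiberwise over the valuation
  have hmaps : ∀ x ∈ B, padicValNat p x.val ∈ Finset.Ico i m := by
    intro x hx
    simp only [hBdef, Finset.mem_filter, Finset.mem_univ, true_and] at hx
    have hval : x.val ≠ 0 := fun h => hx.1 (by
      apply ZMod.val_injective; simpa [ZMod.val_zero] using h)
    rw [Finset.mem_Ico]
    exact ⟨(padicValNat_dvd_iff_le hval).mp hx.2, hvlt x hval⟩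
  rw [← Finset.sum_fiberwise_of_maps_to hmaps (fun x => pnorm p m x ^ r)]
  -- compute each fiber
  have hfiber : ∀ j ∈ Finset.Ico i m,
      ∑ x ∈ B.filter (fun x => padicValNat p x.val = j), pnorm p m x ^ r
        = ((p : ℝ) - 1) * (p : ℝ) ^ ((m : ℝ) - 1) * X ^ j := by
    intro j hj
    rw [Finset.mem_Ico] at hj
    -- identify the fiber
    have hset : B.filter (fun x => padicValNat p x.val = j)
        = (Finset.univ.filter (fun x : ZMod (p ^ m) => p ^ j ∣ x.val))
            \ (Finset.univ.filter (fun x : ZMod (p ^ m) => p ^ (j + 1) ∣ x.val)) := by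
      ext x
      simp only [hBdef, Finset.mem_filter, Finset.mem_sdiff, Finset.mem_univ, true_and]
      constructor
      · rintro ⟨⟨hx0, hdvd⟩, hv⟩
        have hval : x.val ≠ 0 := fun h => hx0 (by
          apply ZMod.val_injective; simpa [ZMod.val_zero] using h)
        refine ⟨(padicValNat_dvd_iff_le hval).mpr (le_of_eq hv.symm), ?_⟩
        rw [padicValNat_dvd_iff_le hval, hv]
        omega
      · rintro ⟨hdvd, hndvd⟩
        have hval : x.val ≠ 0 := by
          rintro h; exact hndvd (by rw [h]; exact dvd_zero _)
        have hx0 : x ≠ 0 := fun h => hval (by rw [h, ZMod.val_zero])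
        have hle : j ≤ padicValNat p x.val := (padicValNat_dvd_iff_le hval).mp hdvd
        have hlt : padicValNat p x.val < j + 1 := by
          by_contra h
          exact hndvd ((padicValNat_dvd_iff_le hval).mpr (by omega))
        have hv : padicValNat p x.val = j := by omega
        exact ⟨⟨hx0, (padicValNat_dvd_iff_le hval).mpr (by omega)⟩, hv⟩
    have hcard : (B.filter (fun x => padicValNat p x.val = j)).card
        = p ^ (m - j) - p ^ (m - (j + 1)) := by
      rw [hset, Finset.card_sdiff_of_subset (by
        intro x hx
        simp only [Finset.mem_filter, Finset.mem_univ, true_and] at *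
        exact dvd_trans (pow_dvd_pow p (Nat.le_succ j)) hx),
        count_zmod p j m (le_of_lt hj.2), count_zmod p (j + 1) m hj.2]
    -- each term equals X-power
    have hterm : ∀ x ∈ B.filter (fun x => padicValNat p x.val = j),
        pnorm p m x ^ r = (p : ℝ) ^ (-(j : ℝ) * r) := by
      intro x hx
      simp only [hBdef, Finset.mem_filter, Finset.mem_univ, true_and] at hx
      unfold pnorm
      rw [if_neg hx.1.1, hx.2, ← Real.rpow_intCast ((p : ℝ)) (-(j : ℤ)),
        ← Real.rpow_mul hP0.le]
      congr 1
      push_cast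
      ring
    rw [Finset.sum_congr rfl hterm, Finset.sum_const, hcard, nsmul_eq_mul]
    have c1 : ((m - j : ℕ) : ℝ) = (m : ℝ) - j := by
      rw [Nat.cast_sub hj.2.le]
    have c2 : ((m - (j + 1) : ℕ) : ℝ) = (m : ℝ) - j - 1 := by
      rw [Nat.cast_sub (by omega : j + 1 ≤ m)]; push_cast; ring
    have hXj : X ^ j = (p : ℝ) ^ (-(r + 1) * (j : ℝ)) := by
      rw [← Real.rpow_natCast X j, hXdef, ← Real.rpow_mul hP0.le]
    have hle : p ^ (m - (j + 1)) ≤ p ^ (m - j) :=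
      Nat.pow_le_pow_right hp.pos (by omega)
    rw [Nat.cast_sub hle, hXj, Nat.cast_pow, Nat.cast_pow,
      ← Real.rpow_natCast (p : ℝ) (m - j), ← Real.rpow_natCast (p : ℝ) (m - (j + 1)), c1, c2,
      show ((p : ℝ) - 1) = (p : ℝ) ^ (1 : ℝ) - (p : ℝ) ^ (0 : ℝ) by norm_num]
    simp only [sub_mul, ← Real.rpow_add hP0]
    congr 2 <;> ring
  rw [Finset.sum_congr rfl hfiber, ← Finset.mul_sum, geom_sum_Ico hX1.ne hi]
  have hC0 : (0 : ℝ) < C := lt_trans one_pos hC1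
  have hXi : (p : ℝ) ^ (-(i : ℝ) * (r + 1)) = X ^ i := by
    rw [← Real.rpow_natCast X i, hXdef, ← Real.rpow_mul hP0.le]
    congr 1; ring
  have hXm : (p : ℝ) ^ (-(m : ℝ) * (r + 1)) = X ^ m := by
    rw [← Real.rpow_natCast X m, hXdef, ← Real.rpow_mul hP0.le]
    congr 1; ring
  rw [hXi, hXm]
  have hab : (p : ℝ) ^ (-(m : ℝ)) * (p : ℝ) ^ ((m : ℝ) - 1) = (p : ℝ)⁻¹ := by
    rw [← Real.rpow_add hP0, show -(m : ℝ) + ((m : ℝ) - 1) = -1 by ring,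
      Real.rpow_neg_one]
  have hpr : (p : ℝ) ^ r = C / (p : ℝ) := by
    rw [hCdef, Real.rpow_add hP0, Real.rpow_one]
    field_simp
  have hmerge : ∀ Q : ℝ, (p : ℝ) ^ (-(m : ℝ)) * (((p : ℝ) - 1) * (p : ℝ) ^ ((m : ℝ) - 1) * Q)
      = (p : ℝ)⁻¹ * (((p : ℝ) - 1) * Q) := by
    intro Q
    rw [show (p : ℝ) ^ (-(m : ℝ)) * (((p : ℝ) - 1) * (p : ℝ) ^ ((m : ℝ) - 1) * Q)
        = ((p : ℝ) ^ (-(m : ℝ)) * (p : ℝ) ^ ((m : ℝ) - 1)) * (((p : ℝ) - 1) * Q) by ring, hab]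
  have h1 : C - 1 ≠ 0 := sub_ne_zero_of_ne hC1.ne'
  have hpne : (p : ℝ) ≠ 0 := hP0.ne'
  have key : (X ^ m - X ^ i) / (X - 1) = (X ^ i - X ^ m) * C / (C - 1) := by
    rw [div_eq_div_iff (sub_ne_zero_of_ne hX1.ne) h1]
    linear_combination (X ^ m - X ^ i) * hXC
  rw [hmerge, hpr, key]
  field_simp
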